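/- Let Ω be a finite set, π a strictly positive probability vector on Ω, and p a transition rate kernel on Ω reversible with respect to π whose underlying graph is connected; set c(x,y) = π(x)p(x,y) for x ≠ y and c(x,x) = 0. Let Π : Ω → Ω̄ be a surjection onto a finite set Ω̄ such that whenever Π(x) = Π(x'): π(x) = π(x') and Σ_{y∈Π⁻¹(b)} p(x,y) = Σ_{y∈Π⁻¹(b)} p(x',y) for every b ∈ Ω̄. Let D : Ω → ℝ satisfy Σ_{x∈Ω} D(x) = 0 and D(x) = D(x') whenever Π(x) = Π(x'). Define D̄(a) = Σ_{x∈Π⁻¹(a)} D(x) and c̄(a,b) = Σ_{x∈Π⁻¹(a)} Σ_{y∈Π⁻¹(b)} c(x,y) for a ≠ b in Ω̄ (and c̄(a,a) = 0). Then the minimum of (1/2)·Σ_{x,y : c(x,y)>0} J(x,y)²/c(x,y) over all antisymmetric J : Ω × Ω → ℝ vanishing wherever c = 0 and satisfying D(x) + Σ_y J(x,y) = 0 for all x, equals the minimum of (1/2)·Σ_{a,b : c̄(a,b)>0} J̄(a,b)²/c̄(a,b) over all antisymmetric J̄ : Ω̄ × Ω̄ → ℝ vanishing wherever c̄ = 0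 and satisfying D̄(a) + Σ_b J̄(a,b) = 0 for all a. -/

import Mathlib

open Finset

section Helpers

open RealInnerProductSpace

variable {α : Type*} [Fintype α] [DecidableEq α]

set_option linter.unusedSectionVars false

lemma quad_identity (c : α → α → ℝ) (hcs : ∀ x y, c x y = c y x) (ψ : α → ℝ) :
    ∑ x, ∑ y, c x y * (ψ x - ψ y) ^ 2 = 2 * ∑ x, ψ x * ∑ y, c x y * (ψ x - ψ y) := by
  have key : ∑ x, ∑ y, c x y * ψ y ^ 2 = ∑ x, ∑ y, c x y * ψ x ^ 2 := by
    rw [Finset.sum_comm]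
    exact sum_congr rfl fun x _ => sum_congr rfl fun y _ => by rw [hcs]
  have e1 : ∀ x : α, ∑ y, c x y * (ψ x - ψ y) ^ 2
      = (∑ y, c x y * ψ x ^ 2) + (∑ y, c x y * ψ y ^ 2) - ∑ y, c x y * (ψ x * ψ y) * 2 := by
    intro x
    rw [← Finset.sum_add_distrib, ← Finset.sum_sub_distrib]
    exact sum_congr rfl fun y _ => by ring
  have e2 : ∀ x : α, ψ x * ∑ y, c x y * (ψ x - ψ y)
      = (∑ y, c x y * ψ x ^ 2) - ∑ y, c x y * (ψ x * ψ y) := by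
    intro x
    rw [← Finset.sum_sub_distrib, Finset.mul_sum]
    exact sum_congr rfl fun y _ => by ring
  simp_rw [e1, e2]
  rw [Finset.sum_sub_distrib, Finset.sum_add_distrib, key, Finset.sum_sub_distrib]
  simp_rw [← Finset.sum_mul]
  ring

lemma kernel_locally_const (c : α → α → ℝ) (hc0 : ∀ x y, 0 ≤ c x y)
    (hcs : ∀ x y, c x y = c y x) (ψ : α → ℝ)
    (h0 : ∀ x, ∑ y, c x y * (ψ x - ψ y) = 0) :
    ∀ x y, 0 < c x y → ψ x = ψ y := by
  have hz : ∑ x, ∑ y, c x y * (ψ x - ψ y) ^ 2 = 0 := by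
    rw [quad_identity c hcs ψ]
    simp [h0]
  intro x y hxy
  have hnn : ∀ x ∈ (univ : Finset α), (0:ℝ) ≤ ∑ y, c x y * (ψ x - ψ y) ^ 2 := fun x _ =>
    Finset.sum_nonneg fun y _ => mul_nonneg (hc0 x y) (sq_nonneg _)
  have h1 := (Finset.sum_eq_zero_iff_of_nonneg hnn).1 hz x (mem_univ x)
  have h2 := (Finset.sum_eq_zero_iff_of_nonneg
    (fun y _ => mul_nonneg (hc0 x y) (sq_nonneg (ψ x - ψ y)))).1 h1 y (mem_univ y)
  rcases mul_eq_zero.1 h2 with h | h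
  · exact absurd h (ne_of_gt hxy)
  · have h3 : ψ x - ψ y = 0 := sq_eq_zero_iff.1 h
    linarith

lemma grad_flux_value (c : α → α → ℝ) (hc0 : ∀ x y, 0 ≤ c x y) (φ : α → ℝ) :
    ∑ x, ∑ y, (if 0 < c x y then (c x y * (φ y - φ x)) ^ 2 / c x y else 0)
      = ∑ x, ∑ y, c x y * (φ y - φ x) ^ 2 := by
  refine sum_congr rfl fun x _ => sum_congr rfl fun y _ => ?_
  by_cases h : 0 < c x y
  · rw [if_pos h]
    field_simp
  · rw [if_neg h]
    have h0 : c x y = 0 := le_antisymm (not_lt.1 h) (hc0 x y)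
    rw [h0, zero_mul]

lemma flux_lower_bound (c : α → α → ℝ) (hc0 : ∀ x y, 0 ≤ c x y)
    (hcs : ∀ x y, c x y = c y x) (D φ : α → ℝ)
    (hdiv : ∀ x, D x + ∑ y, c x y * (φ y - φ x) = 0)
    (J : α → α → ℝ) (hJa : ∀ x y, J x y = - J y x)
    (hJ0 : ∀ x y, c x y = 0 → J x y = 0)
    (hJdiv : ∀ x, D x + ∑ y, J x y = 0) :
    ∑ x, ∑ y, c x y * (φ y - φ x) ^ 2
      ≤ ∑ x, ∑ y, (if 0 < c x y then J x y ^ 2 / c x y else 0) := by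
  set K : α → α → ℝ := fun x y => J x y - c x y * (φ y - φ x) with hK
  have hKrow : ∀ x, ∑ y, K x y = 0 := by
    intro x
    have h1 := hJdiv x
    have h2 := hdiv x
    simp only [hK]
    rw [Finset.sum_sub_distrib]
    linarith
  have hKcol : ∀ y, ∑ x, K x y = 0 := by
    intro y
    have e : ∑ x, K x y = ∑ x, -(K y x) := by
      refine sum_congr rfl fun x _ => ?_
      simp only [hK]
      rw [hJa x y, hcs x y]
      ring
    rw [e, Finset.sum_neg_distrib, hKrow y, neg_zero]
  have hcross : ∑ x, ∑ y, (φ y - φ x) * K x y = 0 := by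
    have e : ∀ x : α, ∑ y, (φ y - φ x) * K x y
        = (∑ y, φ y * K x y) - ∑ y, φ x * K x y := by
      intro x
      rw [← Finset.sum_sub_distrib]
      exact sum_congr rfl fun y _ => by ring
    simp_rw [e]
    rw [Finset.sum_sub_distrib]
    have h1 : ∑ x, ∑ y, φ y * K x y = 0 := by
      rw [Finset.sum_comm]
      refine Finset.sum_eq_zero fun y _ => ?_
      rw [← Finset.mul_sum, hKcol y, mul_zero]
    have h2 : ∑ x : α, ∑ y, φ x * K x y = 0 := by
      refine Finset.sum_eq_zero fun x _ => ?_
      rw [← Finset.mul_sum, hKrow x, mul_zero]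
    rw [h1, h2, sub_zero]
  have hpt : ∀ x y, c x y * (φ y - φ x) ^ 2 + 2 * ((φ y - φ x) * K x y)
      ≤ (if 0 < c x y then J x y ^ 2 / c x y else 0) := by
    intro x y
    by_cases h : 0 < c x y
    · rw [if_pos h]
      have hne : c x y ≠ 0 := ne_of_gt h
      have key : J x y ^ 2 / c x y
          - (c x y * (φ y - φ x) ^ 2 + 2 * ((φ y - φ x) * K x y)) = K x y ^ 2 / c x y := by
        simp only [hK]
        field_simp
        ring
      have hnn : 0 ≤ K x y ^ 2 / c x y := div_nonneg (sq_nonneg _) h.le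
      linarith
    · rw [if_neg h]
      have h0 : c x y = 0 := le_antisymm (not_lt.1 h) (hc0 x y)
      have hJxy : J x y = 0 := hJ0 x y h0
      simp [hK, h0, hJxy]
  calc ∑ x, ∑ y, c x y * (φ y - φ x) ^ 2
      = ∑ x, ∑ y, (c x y * (φ y - φ x) ^ 2 + 2 * ((φ y - φ x) * K x y)) := by
        simp_rw [Finset.sum_add_distrib, ← Finset.mul_sum]
        rw [hcross, mul_zero, add_zero]
    _ ≤ _ := Finset.sum_le_sum fun x _ => Finset.sum_le_sum fun y _ => hpt x y

lemma exists_potential (c : α → α → ℝ) (hcs : ∀ x y, c x y = c y x) (D : α → ℝ)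
    (horth : ∀ ψ : α → ℝ, (∀ x, ∑ y, c x y * (ψ x - ψ y) = 0) → ∑ x, ψ x * D x = 0) :
    ∃ φ : α → ℝ, ∀ x, ∑ y, c x y * (φ x - φ y) = D x := by
  classical
  let T : EuclideanSpace ℝ α →ₗ[ℝ] EuclideanSpace ℝ α :=
    { toFun := fun φ => WithLp.toLp 2 (fun x => ∑ y, c x y * (φ x - φ y) : α → ℝ)
      map_add' := fun φ₁ φ₂ => WithLp.ofLp_injective 2 <| funext fun x => by
        show ∑ y, c x y * ((φ₁ x + φ₂ x) - (φ₁ y + φ₂ y))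
            = (∑ y, c x y * (φ₁ x - φ₁ y)) + (∑ y, c x y * (φ₂ x - φ₂ y))
        rw [← Finset.sum_add_distrib]
        exact Finset.sum_congr rfl fun y _ => by ring
      map_smul' := fun r φ => WithLp.ofLp_injective 2 <| funext fun x => by
        show ∑ y, c x y * (r * φ x - r * φ y) = r * ∑ y, c x y * (φ x - φ y)
        rw [Finset.mul_sum]
        exact Finset.sum_congr rfl fun y _ => by ring }
  have hTapp : ∀ (φ : EuclideanSpace ℝ α) (x : α), T φ x = ∑ y, c x y * (φ x - φ y) :=
    fun φ x => rfl
  have einner : ∀ u v : EuclideanSpace ℝ α, ⟪u, v⟫ = ∑ x, u x * v x := by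
    intro u v
    simp [PiLp.inner_apply, RCLike.inner_apply, conj_trivial]
    exact Finset.sum_congr rfl fun x _ => mul_comm _ _
  have hsym : T.IsSymmetric := by
    intro φ ψ
    rw [einner, einner]
    have l : ∀ x, (T φ) x * ψ x = ∑ y, (c x y * (φ x * ψ x) - c x y * (φ y * ψ x)) := by
      intro x
      rw [hTapp, Finset.sum_mul]
      exact sum_congr rfl fun y _ => by ring
    have r : ∀ x, φ x * (T ψ) x = ∑ y, (c x y * (φ x * ψ x) - c x y * (φ x * ψ y)) := by
      intro x
      rw [hTapp, Finset.mul_sum]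
      exact sum_congr rfl fun y _ => by ring
    have swap : ∑ x, ∑ y, c x y * (φ y * ψ x) = ∑ x, ∑ y, c x y * (φ x * ψ y) := by
      rw [Finset.sum_comm]
      exact sum_congr rfl fun a _ => sum_congr rfl fun b _ => by rw [hcs b a]
    simp_rw [l, r, Finset.sum_sub_distrib]
    rw [swap]
  have hle : LinearMap.range T ≤ (LinearMap.ker T)ᗮ := by
    rintro _ ⟨v, rfl⟩
    rw [Submodule.mem_orthogonal]
    intro u hu
    rw [LinearMap.mem_ker] at hu
    rw [← hsym u v, hu, inner_zero_left]
  have hdim : (LinearMap.ker T)ᗮ = LinearMap.range T := by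
    refine (Submodule.eq_of_le_of_finrank_eq hle ?_).symm
    have h1 := LinearMap.finrank_range_add_finrank_ker T
    have h2 := Submodule.finrank_add_finrank_orthogonal (LinearMap.ker T)
    omega
  have hDmem : (WithLp.toLp 2 D : EuclideanSpace ℝ α) ∈ (LinearMap.ker T)ᗮ := by
    rw [Submodule.mem_orthogonal]
    intro u hu
    rw [LinearMap.mem_ker] at hu
    have hu' : ∀ x, ∑ y, c x y * (u x - u y) = 0 := fun x => congrFun (congrArg WithLp.ofLp hu) x
    rw [einner]
    exact horth u hu'
  rw [hdim] at hDmem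
  obtain ⟨φ, hφ⟩ := hDmem
  exact ⟨φ.ofLp, fun x => congrFun (congrArg WithLp.ofLp hφ) x⟩

end Helpers

/-- The underlying graph of a transition rate kernel `p`. -/
def kernelGraph {Ω : Type*} (p : Ω → Ω → ℝ) : SimpleGraph Ω where
  Adj x y := x ≠ y ∧ (0 < p x y ∨ 0 < p y x)
  symm := ⟨fun x y h => ⟨h.1.symm, h.2.symm⟩⟩
  loopless := ⟨fun x h => h.1 rfl⟩

/-- Symmetry reduction preserves the flux-formulation minimum (squared metric
derivative): the minimal kinetic energy on `Ω` equals that on the projected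
space `Ωb`, and both minima are attained. -/
theorem symmetry_reduction_flux {Ω Ωb : Type*} [Fintype Ω] [Fintype Ωb]
    [DecidableEq Ω] [DecidableEq Ωb]
    (π : Ω → ℝ) (p : Ω → Ω → ℝ)
    (hπpos : ∀ x, 0 < π x) (hπsum : ∑ x, π x = 1)
    (hp : ∀ x y, x ≠ y → 0 ≤ p x y) (hrow : ∀ x, ∑ y, p x y = 0)
    (hrev : ∀ x y, π x * p x y = π y * p y x)
    (hconn : (kernelGraph p).Connected)
    (c : Ω → Ω → ℝ) (hc : ∀ x y, c x y = if x = y then 0 else π x * p x y)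
    (proj : Ω → Ωb) (hsurj : Function.Surjective proj)
    (hπinv : ∀ x x', proj x = proj x' → π x = π x')
    (hpinv : ∀ x x' (b : Ωb), proj x = proj x' →
      ∑ y ∈ univ.filter (fun y => proj y = b), p x y =
      ∑ y ∈ univ.filter (fun y => proj y = b), p x' y)
    (D : Ω → ℝ) (hD : ∑ x, D x = 0)
    (hDinv : ∀ x x', proj x = proj x' → D x = D x')
    (Db : Ωb → ℝ) (hDb : ∀ a, Db a = ∑ x ∈ univ.filter (fun x => proj x = a), D x)
    (cb : Ωb → Ωb → ℝ)
    (hcb : ∀ a b, cb a b = if a = b then 0 else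
      ∑ x ∈ univ.filter (fun x => proj x = a),
        ∑ y ∈ univ.filter (fun y => proj y = b), c x y) :
    ∃ m : ℝ,
      IsLeast {v : ℝ | ∃ J : Ω → Ω → ℝ,
        (∀ x y, J x y = - J y x) ∧
        (∀ x y, c x y = 0 → J x y = 0) ∧
        (∀ x, D x + ∑ y, J x y = 0) ∧
        v = (1 / 2) * ∑ x, ∑ y, if 0 < c x y then J x y ^ 2 / c x y else 0} m ∧
      IsLeast {v : ℝ | ∃ Jb : Ωb → Ωb → ℝ,
        (∀ a b, Jb a b = - Jb b a) ∧
        (∀ a b, cb a b = 0 → Jb a b = 0) ∧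
        (∀ a, Db a + ∑ b, Jb a b = 0) ∧
        v = (1 / 2) * ∑ a, ∑ b, if 0 < cb a b then Jb a b ^ 2 / cb a b else 0} m := by
  classical
  -- symmetry and nonnegativity of the weights
  have hcsymm : ∀ x y, c x y = c y x := by
    intro x y
    rw [hc, hc]
    by_cases h : x = y
    · subst h; simp
    · rw [if_neg h, if_neg (Ne.symm h), hrev]
  have hc0 : ∀ x y, 0 ≤ c x y := by
    intro x y
    rw [hc]
    split_ifs with h
    · exact le_rfl
    · exact mul_nonneg (hπpos x).le (hp x y h)
  have hcbsymm : ∀ a b, cb a b = cb b a := by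
    intro a b
    rw [hcb, hcb]
    by_cases h : a = b
    · subst h; simp
    · rw [if_neg h, if_neg (Ne.symm h), Finset.sum_comm]
      exact sum_congr rfl fun u _ => sum_congr rfl fun v _ => hcsymm v u
  have hcb0 : ∀ a b, 0 ≤ cb a b := by
    intro a b
    rw [hcb]
    split_ifs with h
    · exact le_rfl
    · exact Finset.sum_nonneg fun x _ => Finset.sum_nonneg fun y _ => hc0 x y
  have hcpos_adj : ∀ x y, (kernelGraph p).Adj x y → 0 < c x y := by
    rintro x y ⟨hne, hor⟩
    rw [hc, if_neg hne]
    rcases hor with h | h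
    · exact mul_pos (hπpos x) h
    · rw [hrev]; exact mul_pos (hπpos y) h
  -- sum of Db vanishes
  have hDbsum : ∑ a, Db a = 0 := by
    simp_rw [hDb]
    rw [Finset.sum_fiberwise univ proj D]
    exact hD
  -- invariance of fiber sums of c
  have hSval : ∀ (x : Ω) (b : Ωb), proj x ≠ b →
      ∑ y ∈ univ.filter (fun y => proj y = b), c x y
        = π x * ∑ y ∈ univ.filter (fun y => proj y = b), p x y := by
    intro x b hb
    rw [Finset.mul_sum]
    refine sum_congr rfl fun y hy => ?_
    have hyb : proj y = b := by simpa using hy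
    have hxy : x ≠ y := fun h => hb (h ▸ hyb)
    rw [hc, if_neg hxy]
  have hSinv : ∀ (x x' : Ω) (b : Ωb), proj x = proj x' → proj x ≠ b →
      ∑ y ∈ univ.filter (fun y => proj y = b), c x y
        = ∑ y ∈ univ.filter (fun y => proj y = b), c x' y := by
    intro x x' b hxx hb
    rw [hSval x b hb, hSval x' b (hxx ▸ hb), hπinv x x' hxx, hpinv x x' b hxx]
  have hcb_eq : ∀ (x : Ω) (b : Ωb), proj x ≠ b →
      cb (proj x) b = ((univ.filter (fun z => proj z = proj x)).card : ℝ)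
        * ∑ y ∈ univ.filter (fun y => proj y = b), c x y := by
    intro x b hb
    rw [hcb, if_neg hb]
    rw [Finset.sum_congr rfl (fun x' hx' => by
      have hx'2 : proj x' = proj x := by simpa using hx'
      exact hSinv x' x b hx'2 (hx'2 ▸ hb))]
    rw [Finset.sum_const, nsmul_eq_mul]
  -- solve the projected Poisson equation
  obtain ⟨ψ, hψ⟩ : ∃ ψ : Ωb → ℝ, ∀ a, ∑ b, cb a b * (ψ a - ψ b) = Db a := by
    apply exists_potential cb hcbsymm Db
    intro χ hχ
    have hloc := kernel_locally_const cb hcb0 hcbsymm χ hχ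
    have hedge : ∀ x y : Ω, (kernelGraph p).Adj x y → χ (proj x) = χ (proj y) := by
      intro x y hadj
      by_cases h : proj x = proj y
      · rw [h]
      · apply hloc
        rw [hcb, if_neg h]
        refine Finset.sum_pos' (fun i _ => Finset.sum_nonneg fun j _ => hc0 i j)
          ⟨x, by simp, ?_⟩
        exact Finset.sum_pos' (fun j _ => hc0 x j) ⟨y, by simp, hcpos_adj x y hadj⟩
    have hwalk : ∀ x y : Ω, χ (proj x) = χ (proj y) := by
      intro x y
      obtain ⟨w⟩ := hconn.preconnected x y
      induction w with
      | nil => rfl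
      | cons h _ ih => exact (hedge _ _ h).trans ih
    obtain ⟨x0⟩ := hconn.nonempty
    have hconst : ∀ a, χ a = χ (proj x0) := by
      intro a
      obtain ⟨x, rfl⟩ := hsurj a
      exact hwalk x x0
    calc ∑ a, χ a * Db a = ∑ a, χ (proj x0) * Db a :=
          sum_congr rfl fun a _ => by rw [hconst a]
      _ = χ (proj x0) * ∑ a, Db a := by rw [Finset.mul_sum]
      _ = 0 := by rw [hDbsum, mul_zero]
  -- divergence identities for the gradient fluxes
  have hdivψ : ∀ a, Db a + ∑ b, cb a b * (ψ b - ψ a) = 0 := by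
    intro a
    have h1 : ∑ b, cb a b * (ψ b - ψ a) = - ∑ b, cb a b * (ψ a - ψ b) := by
      rw [← Finset.sum_neg_distrib]
      exact sum_congr rfl fun b _ => by ring
    rw [h1, hψ a]
    ring
  have hdivφ : ∀ x, D x + ∑ y, c x y * (ψ (proj y) - ψ (proj x)) = 0 := by
    intro x
    have hxa : x ∈ univ.filter (fun z => proj z = proj x) := by simp
    have hNpos : (0:ℝ) < ((univ.filter (fun z => proj z = proj x)).card : ℝ) := by
      exact_mod_cast Finset.card_pos.2 ⟨x, hxa⟩
    have hDba : Db (proj x)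
        = ((univ.filter (fun z => proj z = proj x)).card : ℝ) * D x := by
      rw [hDb, Finset.sum_congr rfl (fun x' hx' => hDinv x' x (by simpa using hx')),
        Finset.sum_const, nsmul_eq_mul]
    have hsplit : ∑ y, c x y * (ψ (proj y) - ψ (proj x))
        = ∑ b, ∑ y ∈ univ.filter (fun y => proj y = b),
            c x y * (ψ (proj y) - ψ (proj x)) :=
      (Finset.sum_fiberwise univ proj _).symm
    have hinner : ∀ b, ∑ y ∈ univ.filter (fun y => proj y = b),
        c x y * (ψ (proj y) - ψ (proj x))
        = (ψ b - ψ (proj x)) * ∑ y ∈ univ.filter (fun y => proj y = b), c x y := by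
      intro b
      rw [Finset.mul_sum]
      refine sum_congr rfl fun y hy => ?_
      have hyb : proj y = b := by simpa using hy
      rw [hyb]
      ring
    have hkey : ∀ b, ((univ.filter (fun z => proj z = proj x)).card : ℝ)
        * ((ψ b - ψ (proj x)) * ∑ y ∈ univ.filter (fun y => proj y = b), c x y)
        = cb (proj x) b * (ψ b - ψ (proj x)) := by
      intro b
      by_cases hb : proj x = b
      · subst hb; simp
      · rw [hcb_eq x b hb]; ring
    have hsum : ((univ.filter (fun z => proj z = proj x)).card : ℝ)
        * ∑ y, c x y * (ψ (proj y) - ψ (proj x))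
        = ((univ.filter (fun z => proj z = proj x)).card : ℝ) * (- D x) := by
      rw [hsplit, Finset.mul_sum]
      calc ∑ b, ((univ.filter (fun z => proj z = proj x)).card : ℝ)
            * ∑ y ∈ univ.filter (fun y => proj y = b),
                c x y * (ψ (proj y) - ψ (proj x))
          = ∑ b, cb (proj x) b * (ψ b - ψ (proj x)) :=
            sum_congr rfl fun b _ => by rw [hinner b]; exact hkey b
        _ = - ∑ b, cb (proj x) b * (ψ (proj x) - ψ b) := by
            rw [← Finset.sum_neg_distrib]
            exact sum_congr rfl fun b _ => by ring
        _ = - Db (proj x) := by rw [hψ (proj x)]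
        _ = ((univ.filter (fun z => proj z = proj x)).card : ℝ) * (- D x) := by
            rw [hDba]; ring
    have := mul_left_cancel₀ (ne_of_gt hNpos) hsum
    linarith
  -- the value on Ω coincides fiberwise with the value on Ωb
  have hfibval : ∑ x, ∑ y, c x y * (ψ (proj y) - ψ (proj x)) ^ 2
      = ∑ a, ∑ b, cb a b * (ψ b - ψ a) ^ 2 := by
    have step1 : ∑ x, ∑ y, c x y * (ψ (proj y) - ψ (proj x)) ^ 2
        = ∑ a, ∑ x ∈ univ.filter (fun x => proj x = a),
            ∑ y, c x y * (ψ (proj y) - ψ (proj x)) ^ 2 :=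
      (Finset.sum_fiberwise univ proj _).symm
    rw [step1]
    refine sum_congr rfl fun a _ => ?_
    have step2 : ∀ x : Ω, ∑ y, c x y * (ψ (proj y) - ψ (proj x)) ^ 2
        = ∑ b, ∑ y ∈ univ.filter (fun y => proj y = b),
            c x y * (ψ (proj y) - ψ (proj x)) ^ 2 :=
      fun x => (Finset.sum_fiberwise univ proj _).symm
    simp_rw [step2]
    rw [Finset.sum_comm]
    refine sum_congr rfl fun b _ => ?_
    by_cases hab : a = b
    · subst hab
      rw [hcb]
      rw [if_pos rfl, zero_mul]
      refine Finset.sum_eq_zero fun x hx => ?_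
      refine Finset.sum_eq_zero fun y hy => ?_
      have hx2 : proj x = a := by simpa using hx
      have hy2 : proj y = a := by simpa using hy
      rw [hx2, hy2]
      simp
    · rw [hcb, if_neg hab, Finset.sum_mul]
      refine sum_congr rfl fun x hx => ?_
      rw [Finset.sum_mul]
      refine sum_congr rfl fun y hy => ?_
      have hx2 : proj x = a := by simpa using hx
      have hy2 : proj y = b := by simpa using hy
      rw [hx2, hy2]
  -- assemble
  refine ⟨(1 / 2) * ∑ a, ∑ b, cb a b * (ψ b - ψ a) ^ 2,
    ⟨⟨fun x y => c x y * (ψ (proj y) - ψ (proj x)), ?_, ?_, ?_, ?_⟩, ?_⟩,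
    ⟨⟨fun a b => cb a b * (ψ b - ψ a), ?_, ?_, ?_, ?_⟩, ?_⟩⟩
  · intro x y
    simp only
    rw [hcsymm x y]
    ring
  · intro x y h
    simp only
    rw [h, zero_mul]
  · exact hdivφ
  · simp only
    rw [grad_flux_value c hc0 (fun x => ψ (proj x)), hfibval]
  · rintro v ⟨J', hJ'a, hJ'0, hJ'div, rfl⟩
    have hlow := flux_lower_bound c hc0 hcsymm D (fun x => ψ (proj x)) hdivφ J' hJ'a hJ'0 hJ'div
    rw [← hfibval]
    linarith
  · intro a b
    simp only
    rw [hcbsymm a b]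
    ring
  · intro a b h
    simp only
    rw [h, zero_mul]
  · exact hdivψ
  · simp only
    rw [grad_flux_value cb hcb0 ψ]
  · rintro v ⟨Jb', hJb'a, hJb'0, hJb'div, rfl⟩
    have hlow := flux_lower_bound cb hcb0 hcbsymm Db ψ hdivψ Jb' hJb'a hJb'0 hJb'div
    linarith
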